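/- arXiv:2101.11992 — 4 statements merged into one kernel-verified Lean document; each statement's English description precedes it below -/
import Mathlib

section
/- Let p ∈ [1/2, 1], γ ∈ [0, 1), m a natural number, and let M be the 2×2 real matrix M = [[1−p, p],[p, 1−p]]. For every stationary deterministic policy π : {0,1} → {0,1} and every state sequence s : ℕ → {0,1}, the discounted delayed return Σ_{t=0}^∞ γ^t · (M^m)(s_t, π(s_t)) is at most (1 + (2p−1)^m) / (2(1−γ)). Moreover, for the policy π* defined by π*(i) = i if m is even and π*(i) = 1−i if m is odd, the return Σ_{t=0}^∞ γ^t · (M^m)(s_t, π*(s_t)) equals (1 + (2p−1)^m) / (2(1−γ)) for every state sequence s. -/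
/-- In the two-state MDP with execution delay `m` (Example 1), for any stationary
deterministic policy `π : Fin 2 → Fin 2` and any state sequence `s`, the discounted
delayed return `∑ₜ γ^t (M^m)(s_t, π(s_t))` is at most `(1 + (2p-1)^m)/(2(1-γ))`,
and the policy `π*` (identity for even `m`, flip for odd `m`) attains this value. -/
theorem two_state_delayed_optimal_return (p γ : ℝ) (hp₁ : 1 / 2 ≤ p) (hp₂ : p ≤ 1)
    (hγ₀ : 0 ≤ γ) (hγ₁ : γ < 1) (m : ℕ)
    (M : Matrix (Fin 2) (Fin 2) ℝ) (hM : M = !![1 - p, p; p, 1 - p]) :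
    (∀ (π : Fin 2 → Fin 2) (s : ℕ → Fin 2),
      (∑' t : ℕ, γ ^ t * (M ^ m) (s t) (π (s t))) ≤ (1 + (2 * p - 1) ^ m) / (2 * (1 - γ))) ∧
    (∀ s : ℕ → Fin 2,
      (∑' t : ℕ, γ ^ t * (M ^ m) (s t) ((if Even m then id else fun i : Fin 2 => 1 - i) (s t)))
        = (1 + (2 * p - 1) ^ m) / (2 * (1 - γ))) := by
  have hq0 : (0:ℝ) ≤ 2 * p - 1 := by linarith
  have key : M ^ m = !![(1 + (1-2*p)^m)/2, (1 - (1-2*p)^m)/2;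
                        (1 - (1-2*p)^m)/2, (1 + (1-2*p)^m)/2] := by
    induction m with
    | zero => simp [Matrix.one_fin_two]
    | succ n ih =>
      rw [pow_succ, ih, hM]
      ext i j
      fin_cases i <;> fin_cases j <;>
        simp [Matrix.mul_apply, Fin.sum_univ_two, pow_succ] <;> ring
  have habs : |(1-2*p)^m| = (2*p-1)^m := by
    rw [abs_pow]; congr 1; rw [abs_of_nonpos (by linarith)]; ring
  have hle1 : (2*p-1)^m ≤ 1 := pow_le_one₀ hq0 (by linarith)
  have hA : (1 + (1-2*p)^m)/2 ≤ (1 + (2*p-1)^m)/2 := by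
    have := le_abs_self ((1-2*p)^m); rw [habs] at this; linarith
  have hB : (1 - (1-2*p)^m)/2 ≤ (1 + (2*p-1)^m)/2 := by
    have := neg_abs_le ((1-2*p)^m); rw [habs] at this; linarith
  have hA0 : 0 ≤ (1 + (1-2*p)^m)/2 := by
    have := neg_abs_le ((1-2*p)^m); rw [habs] at this; linarith
  have hB0 : 0 ≤ (1 - (1-2*p)^m)/2 := by
    have := le_abs_self ((1-2*p)^m); rw [habs] at this; linarith
  set c : ℝ := (1 + (2*p-1)^m)/2 with hc
  have hent_le : ∀ i j : Fin 2, (M ^ m) i j ≤ c := by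
    intro i j; fin_cases i <;> fin_cases j <;> simp [key] <;> [exact hA; exact hB; exact hB; exact hA]
  have hent_nn : ∀ i j : Fin 2, 0 ≤ (M ^ m) i j := by
    intro i j; fin_cases i <;> fin_cases j <;> simp [key] <;>
      [exact hA0; exact hB0; exact hB0; exact hA0]
  have hopt : ∀ i : Fin 2,
      (M ^ m) i ((if Even m then id else fun j : Fin 2 => 1 - j) i) = c := by
    intro i
    rcases Nat.even_or_odd m with he | ho
    · have hpow : (1-2*p)^m = (2*p-1)^m := by
        have : (1-2*p) = -(2*p-1) := by ring
        rw [this, he.neg_pow]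
      simp only [if_pos he, id]
      fin_cases i <;> simp [key, hpow, hc]
    · have hpow : (1-2*p)^m = -((2*p-1)^m) := by
        have : (1-2*p) = -(2*p-1) := by ring
        rw [this, ho.neg_pow]
      have hne : ¬ Even m := Nat.not_even_iff_odd.mpr ho
      simp only [if_neg hne]
      fin_cases i <;> simp [key, hpow, hc]
  have hg : Summable (fun t : ℕ => γ ^ t) := summable_geometric_of_lt_one hγ₀ hγ₁
  have hgc : Summable (fun t : ℕ => γ ^ t * c) := hg.mul_right c
  have htc : (∑' t : ℕ, γ ^ t * c) = (1 + (2*p-1)^m) / (2 * (1 - γ)) := by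
    rw [tsum_mul_right, tsum_geometric_of_lt_one hγ₀ hγ₁, hc, inv_mul_eq_div, div_div]
  constructor
  · intro π s
    calc (∑' t : ℕ, γ ^ t * (M ^ m) (s t) (π (s t)))
        ≤ ∑' t : ℕ, γ ^ t * c := by
          refine Summable.tsum_le_tsum (fun t => ?_) ?_ hgc
          · exact mul_le_mul_of_nonneg_left (hent_le _ _) (pow_nonneg hγ₀ t)
          · refine Summable.of_nonneg_of_le
              (fun t => mul_nonneg (pow_nonneg hγ₀ t) (hent_nn _ _))
              (fun t => mul_le_mul_of_nonneg_left (hent_le _ _) (pow_nonneg hγ₀ t)) hgc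
      _ = (1 + (2*p-1)^m) / (2 * (1 - γ)) := htc
  · intro s
    rw [tsum_congr (fun t => by rw [hopt (s t)]), htc]
end

section
/- In the chain MDP with parameters n ∈ ℕ and γ ∈ (0,1), for every t with 0 ≤ t ≤ n, let π_t be the policy that plays u exactly on the states s_i with n+1−t ≤ i ≤ n (and d on all other non-absorbing states). Then the value of π_t satisfies v^{π_t}(s_i) = γ^{n−i} for n+1−t ≤ i ≤ n, and v^{π_t}(s) = 0 for all other states s (including the absorbing state s_{n+1}). -/
/-- States of the chain MDP with parameters `n`: `s_0, …, s_{n+1}`, where `s_{n+1}`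
is absorbing. Actions: `true = u`, `false = d`. -/
def chainStep (n : ℕ) (s : Fin (n + 2)) (a : Bool) : Fin (n + 2) :=
  if a then (if h : s.val < n then ⟨s.val + 1, by omega⟩ else s) else ⟨n + 1, by omega⟩

/-- Reward of the chain MDP: `r(s_n, u) = 1 - γ` and `0` otherwise. -/
def chainReward (n : ℕ) (γ : ℝ) (s : Fin (n + 2)) (a : Bool) : ℝ :=
  if s.val = n ∧ a = true then 1 - γ else 0

/-- Deterministic trajectory of a policy `π` from state `s`. -/
def chainTraj (n : ℕ) (π : Fin (n + 2) → Bool) (s : Fin (n + 2)) : ℕ → Fin (n + 2)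
  | 0 => s
  | t + 1 => chainStep n (chainTraj n π s t) (π (chainTraj n π s t))

/-- Value `v^π(s) = ∑ₜ γ^t r(x_t, π(x_t))` of a policy `π` in the chain MDP. -/
noncomputable def chainValue (n : ℕ) (γ : ℝ) (π : Fin (n + 2) → Bool) (s : Fin (n + 2)) : ℝ :=
  ∑' t : ℕ, γ ^ t * chainReward n γ (chainTraj n π s t) (π (chainTraj n π s t))

/-- Value of the policy `π_t` that plays `u` exactly on the states `s_i` with
`n+1-t ≤ i ≤ n`: it equals `γ^(n-i)` on those states and `0` elsewhere. -/
theorem chain_policy_value (n : ℕ) (γ : ℝ) (hγ₀ : 0 < γ) (hγ₁ : γ < 1)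
    (t : ℕ) (ht : t ≤ n)
    (π : Fin (n + 2) → Bool) (hπ : ∀ s, π s = decide (n + 1 - t ≤ s.val ∧ s.val ≤ n)) :
    (∀ i : Fin (n + 2), n + 1 - t ≤ i.val → i.val ≤ n →
      chainValue n γ π i = γ ^ (n - i.val)) ∧
    (∀ s : Fin (n + 2), ¬(n + 1 - t ≤ s.val ∧ s.val ≤ n) → chainValue n γ π s = 0) := by
  constructor
  · intro i h1 h2
    have ht1 : 1 ≤ t := by omega
    have htraj : ∀ k, (chainTraj n π i k).val = min (i.val + k) n := by
      intro k
      induction k with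
      | zero => simp [chainTraj]; omega
      | succ k ih =>
        simp only [chainTraj]
        have hreg : n + 1 - t ≤ (chainTraj n π i k).val ∧ (chainTraj n π i k).val ≤ n := by
          omega
        rw [hπ, decide_eq_true hreg]
        simp only [chainStep, if_pos]
        split
        · simp; omega
        · omega
    have hterm : ∀ k, γ ^ k * chainReward n γ (chainTraj n π i k) (π (chainTraj n π i k))
        = if n - i.val ≤ k then γ ^ k * (1 - γ) else 0 := by
      intro k
      have hv := htraj k
      unfold chainReward
      by_cases hk : n - i.val ≤ k
      · have hvn : (chainTraj n π i k).val = n := by omega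
        have hreg : n + 1 - t ≤ (chainTraj n π i k).val ∧ (chainTraj n π i k).val ≤ n := by omega
        rw [hπ, decide_eq_true hreg, if_pos hk, if_pos ⟨hvn, rfl⟩]
      · have hvn : (chainTraj n π i k).val ≠ n := by omega
        rw [if_neg hk, if_neg (by simp [hvn])]
        ring
    unfold chainValue
    rw [tsum_congr hterm]
    set m := n - i.val with hm
    have hinj : Function.Injective (fun j : ℕ => j + m) := add_left_injective m
    have hsupp : Function.support (fun k : ℕ => if m ≤ k then γ ^ k * (1 - γ) else 0)
        ⊆ Set.range (fun j : ℕ => j + m) := by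
      intro k hk
      simp only [Function.mem_support] at hk
      have : m ≤ k := by by_contra h; simp [h] at hk
      exact ⟨k - m, show k - m + m = k by omega⟩
    rw [← hinj.tsum_eq hsupp]
    have : ∀ j : ℕ, (if m ≤ j + m then γ ^ (j + m) * (1 - γ) else 0)
        = γ ^ m * (1 - γ) * γ ^ j := by
      intro j
      rw [if_pos (by omega), pow_add]; ring
    rw [tsum_congr this, tsum_mul_left, tsum_geometric_of_lt_one hγ₀.le hγ₁]
    rw [mul_assoc, mul_inv_cancel₀ (by linarith), mul_one]
  · intro s hs
    have htraj : ∀ k, 1 ≤ k → (chainTraj n π s k).val = n + 1 := by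
      intro k hk
      induction k with
      | zero => omega
      | succ k ih =>
        simp only [chainTraj]
        have hfalse : π (chainTraj n π s k) = false := by
          rw [hπ, decide_eq_false_iff_not]
          rcases Nat.eq_zero_or_pos k with h0 | h0
          · subst h0; simpa [chainTraj] using hs
          · have := ih h0; omega
        rw [hfalse]
        simp [chainStep]
    have hterm : ∀ k, γ ^ k * chainReward n γ (chainTraj n π s k) (π (chainTraj n π s k)) = 0 := by
      intro k
      have hfalse : π (chainTraj n π s k) = false := by
        rw [hπ, decide_eq_false_iff_not]
        rcases Nat.eq_zero_or_pos k with h0 | h0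
        · subst h0; simpa [chainTraj] using hs
        · have := htraj k h0; omega
      rw [hfalse]
      simp [chainReward]
    unfold chainValue
    rw [tsum_congr hterm, tsum_zero]
end

section
/- In the chain MDP with parameters n ∈ ℕ and γ ∈ (0,1), fix t with 0 ≤ t ≤ n and let v_t be the function with v_t(s_i) = γ^{n−i} for n+1−t ≤ i ≤ n and v_t(s) = 0 for all other states. Then the greedy policy with respect to v_t — the policy that at each state s selects the action a maximizing r(s,a) + γ·v_t(f(s,a)), choosing d in case of a tie — plays u exactly on the states s_i with n−t ≤ i ≤ n. -/
/-- The greedy policy w.r.t. a value function `v`: at each state pick the action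
maximizing `r(s,a) + γ·v(f(s,a))`, choosing `d` (= `false`) in case of a tie. -/
noncomputable def chainGreedy (n : ℕ) (γ : ℝ) (v : Fin (n + 2) → ℝ) (s : Fin (n + 2)) : Bool :=
  if chainReward n γ s true + γ * v (chainStep n s true) >
     chainReward n γ s false + γ * v (chainStep n s false) then true else false

/-- Given the value function `v_t` (equal to `γ^(n-i)` on states `s_i` with
`n+1-t ≤ i ≤ n` and `0` elsewhere), the greedy policy w.r.t. `v_t` plays `u` exactly
on the states `s_i` with `n-t ≤ i ≤ n`. -/
theorem chain_greedy_of_value (n : ℕ) (γ : ℝ) (hγ₀ : 0 < γ) (hγ₁ : γ < 1)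
    (t : ℕ) (ht : t ≤ n)
    (v : Fin (n + 2) → ℝ)
    (hv : ∀ i : Fin (n + 2),
      v i = if n + 1 - t ≤ i.val ∧ i.val ≤ n then γ ^ (n - i.val) else 0) :
    ∀ s : Fin (n + 2), chainGreedy n γ v s = true ↔ (n - t ≤ s.val ∧ s.val ≤ n) := by
  intro s
  have h0 : v ⟨n + 1, by omega⟩ = 0 := by rw [hv]; simp
  simp only [chainGreedy, chainStep, chainReward, Bool.false_eq_true, and_false, and_true,
    if_false, if_true, ite_true, ite_false, h0, mul_zero, add_zero, zero_add]
  by_cases hs : s.val < n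
  · rw [dif_pos hs, if_neg (show ¬(s.val = n) by omega), zero_add, hv ⟨s.val + 1, by omega⟩]
    by_cases hc : n - t ≤ s.val
    · rw [if_pos (show n + 1 - t ≤ s.val + 1 ∧ s.val + 1 ≤ n by omega),
        if_pos (by positivity)]
      simp; omega
    · rw [if_neg (show ¬(n + 1 - t ≤ s.val + 1 ∧ s.val + 1 ≤ n) by omega), mul_zero,
        if_neg (by simp)]
      simp; omega
  · by_cases hsn : s.val = n
    · rw [dif_neg hs, if_pos hsn]
      have hnn : (0:ℝ) ≤ v s := by
        rw [hv]; split
        · positivity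
        · exact le_refl 0
      rw [if_pos (by nlinarith)]
      simp; omega
    · have hs0 : v s = 0 := by rw [hv, if_neg (show ¬_ by omega)]
      rw [dif_neg hs, if_neg hsn, hs0, mul_zero, zero_add, if_neg (by simp)]
      simp; omega
end

section
/- In the chain MDP with parameters n ∈ ℕ and γ ∈ (0,1), consider Howard's policy iteration started from π_0 ≡ d and iterating π_{k+1} = the greedy policy with respect to v^{π_k} (ties broken towards d). Then for every 0 ≤ k ≤ n+1, the iterate π_k plays u exactly on the states s_i with n+1−k ≤ i ≤ n. Consequently π_k ≠ π_{k+1} for all 0 ≤ k ≤ n while π_{n+1} = π_{n+2}, so policy iteration performs exactly n+1 = |S|−1 policy changes before converging, where |S| = n+2 is the number of states. -/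
/-- Howard's policy iteration on the chain MDP, started from the all-`d` policy. -/
noncomputable def chainPI (n : ℕ) (γ : ℝ) : ℕ → (Fin (n + 2) → Bool)
  | 0 => fun _ => false
  | k + 1 => chainGreedy n γ (chainValue n γ (chainPI n γ k))

/-- A policy that plays `u` exactly on the states `s_i` with `n+1-k ≤ i ≤ n`. -/
def goodPol (n k : ℕ) (π : Fin (n + 2) → Bool) : Prop :=
  ∀ i : Fin (n + 2), π i = true ↔ (n + 1 - k ≤ i.val ∧ i.val ≤ n)

lemma chainReward_false (n : ℕ) (γ : ℝ) (s : Fin (n + 2)) : chainReward n γ s false = 0 := by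
  simp [chainReward]

lemma goodPol_last {n k : ℕ} {π : Fin (n + 2) → Bool} (h : goodPol n k π) :
    π ⟨n + 1, by omega⟩ = false := by
  cases hb : π ⟨n + 1, by omega⟩
  · rfl
  · have := (h ⟨n + 1, by omega⟩).mp hb
    simp only [Fin.val_mk] at this
    omega

lemma traj_up {n k : ℕ} {π : Fin (n + 2) → Bool} (hπ : goodPol n k π)
    {s : Fin (n + 2)} (h1 : n + 1 - k ≤ s.val) (h2 : s.val ≤ n) :
    ∀ t : ℕ, chainTraj n π s t = ⟨min (s.val + t) n, by omega⟩ := by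
  intro t
  induction t with
  | zero =>
    show s = _
    ext; simp; omega
  | succ t ih =>
    show chainStep n (chainTraj n π s t) (π (chainTraj n π s t)) = _
    rw [ih]
    have hpt : π ⟨min (s.val + t) n, by omega⟩ = true :=
      (hπ _).mpr ⟨by simp only [Fin.val_mk]; omega, by simp only [Fin.val_mk]; omega⟩
    rw [hpt]
    simp only [chainStep, if_true]
    by_cases hlt : min (s.val + t) n < n
    · rw [dif_pos hlt]
      ext; simp; omega
    · rw [dif_neg hlt]
      ext; simp; omega

lemma chainValue_good {n k : ℕ} {γ : ℝ} (hγ₀ : 0 < γ) (hγ₁ : γ < 1)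
    {π : Fin (n + 2) → Bool} (hπ : goodPol n k π) (s : Fin (n + 2)) :
    chainValue n γ π s = if n + 1 - k ≤ s.val ∧ s.val ≤ n then γ ^ (n - s.val) else 0 := by
  by_cases hc : n + 1 - k ≤ s.val ∧ s.val ≤ n
  · rw [if_pos hc]
    have htraj := traj_up hπ hc.1 hc.2
    have hterm : ∀ t : ℕ, γ ^ t * chainReward n γ (chainTraj n π s t) (π (chainTraj n π s t))
        = γ ^ t * (if n - s.val ≤ t then 1 - γ else 0) := by
      intro t
      rw [htraj t]
      have hpt : π ⟨min (s.val + t) n, by omega⟩ = true :=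
        (hπ _).mpr ⟨by simp only [Fin.val_mk]; omega, by simp only [Fin.val_mk]; omega⟩
      rw [hpt]
      simp only [chainReward, Fin.val_mk]
      rcases le_or_gt (n - s.val) t with hd | hd
      · rw [if_pos ⟨by omega, trivial⟩, if_pos hd]
      · rw [if_neg (by rintro ⟨h1, -⟩; omega), if_neg (by omega)]
    unfold chainValue
    rw [tsum_congr hterm]
    set d := n - s.val with hdd
    have h1γ : (1 : ℝ) - γ ≠ 0 := by linarith
    have hg : HasSum (fun j : ℕ => γ ^ d * (1 - γ) * γ ^ j) (γ ^ d * (1 - γ) * (1 - γ)⁻¹) :=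
      (hasSum_geometric_of_lt_one hγ₀.le hγ₁).mul_left _
    have hval : γ ^ d * (1 - γ) * (1 - γ)⁻¹ = γ ^ d := by field_simp
    rw [hval] at hg
    have hg2 : HasSum (fun j : ℕ => γ ^ (j + d) * (if d ≤ j + d then 1 - γ else 0))
        (γ ^ d) := by
      refine hg.congr_fun fun j => ?_
      rw [if_pos (by omega), pow_add]
      ring
    rw [hasSum_nat_add_iff (f := fun t : ℕ => γ ^ t * (if d ≤ t then 1 - γ else 0)) d] at hg2
    have hz : (∑ i ∈ Finset.range d, γ ^ i * (if d ≤ i then 1 - γ else 0)) = 0 := by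
      refine Finset.sum_eq_zero fun i hi => ?_
      rw [if_neg (by simp only [Finset.mem_range] at hi; omega), mul_zero]
    rw [hz, add_zero] at hg2
    exact hg2.tsum_eq
  · rw [if_neg hc]
    have hs : π s = false := by
      cases hb : π s
      · rfl
      · exact absurd ((hπ s).mp hb) hc
    have hall : ∀ t : ℕ, π (chainTraj n π s t) = false := by
      intro t
      induction t with
      | zero => exact hs
      | succ t ih =>
        show π (chainStep n (chainTraj n π s t) (π (chainTraj n π s t))) = false
        rw [ih]
        have hstep : chainStep n (chainTraj n π s t) false = ⟨n + 1, by omega⟩ := by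
          simp [chainStep]
        rw [hstep]
        exact goodPol_last hπ
    have hzero : ∀ t : ℕ,
        γ ^ t * chainReward n γ (chainTraj n π s t) (π (chainTraj n π s t)) = 0 := by
      intro t
      rw [hall t, chainReward_false, mul_zero]
    unfold chainValue
    rw [tsum_congr hzero]
    exact tsum_zero

lemma greedy_good {n k : ℕ} {γ : ℝ} (hγ₀ : 0 < γ) (hγ₁ : γ < 1)
    {π : Fin (n + 2) → Bool} (hπ : goodPol n k π) :
    goodPol n (k + 1) (chainGreedy n γ (chainValue n γ π)) := by
  intro i
  have hv := chainValue_good hγ₀ hγ₁ hπ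
  have hQd : chainReward n γ i false + γ * chainValue n γ π (chainStep n i false) = 0 := by
    have hstepf : chainStep n i false = ⟨n + 1, by omega⟩ := by simp [chainStep]
    rw [hstepf, chainReward_false, hv]
    rw [if_neg (by simp only [Fin.val_mk]; omega)]
    ring
  unfold chainGreedy
  rw [hQd]
  rcases lt_trichotomy i.val n with hlt | heq | hgt
  · -- i.val < n
    have hstept : chainStep n i true = ⟨i.val + 1, by omega⟩ := by
      simp [chainStep, hlt]
    have hr : chainReward n γ i true = 0 := by
      rw [chainReward, if_neg (by rintro ⟨h, -⟩; omega)]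
    by_cases hc : n + 1 - k ≤ i.val + 1
    · have hQu : chainReward n γ i true + γ * chainValue n γ π (chainStep n i true)
          = γ ^ (n - i.val) := by
        rw [hstept, hr, hv,
          if_pos ⟨by simp only [Fin.val_mk]; omega, by simp only [Fin.val_mk]; omega⟩]
        simp only [Fin.val_mk]
        rw [zero_add, show n - i.val = (n - (i.val + 1)) + 1 by omega, pow_succ]
        ring
      rw [hQu, if_pos (by positivity)]
      simp only [true_iff]
      exact ⟨by omega, by omega⟩
    · have hQu : chainReward n γ i true + γ * chainValue n γ π (chainStep n i true) = 0 := by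
        rw [hstept, hr, hv,
          if_neg (by simp only [Fin.val_mk]; rintro ⟨h1, -⟩; omega)]
        ring
      rw [hQu, if_neg (lt_irrefl 0)]
      simp only [Bool.false_eq_true, false_iff]
      rintro ⟨h1, -⟩
      omega
  · -- i.val = n
    have hstept : chainStep n i true = i := by
      simp [chainStep, heq]
    have hr : chainReward n γ i true = 1 - γ := by
      rw [chainReward, if_pos ⟨heq, rfl⟩]
    have hQu : 0 < chainReward n γ i true + γ * chainValue n γ π (chainStep n i true) := by
      rw [hstept, hr, hv]
      have h1 : (0 : ℝ) < 1 - γ := by linarith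
      by_cases hc : n + 1 - k ≤ i.val ∧ i.val ≤ n
      · rw [if_pos hc]
        have h2 : (0 : ℝ) < γ * γ ^ (n - i.val) := by positivity
        linarith
      · rw [if_neg hc]
        linarith
    rw [if_pos hQu]
    simp only [true_iff]
    exact ⟨by omega, by omega⟩
  · -- i.val = n + 1
    have hstept : chainStep n i true = i := by
      simp [chainStep, show ¬ i.val < n by omega]
    have hr : chainReward n γ i true = 0 := by
      rw [chainReward, if_neg (by rintro ⟨h, -⟩; omega)]
    have hQu : chainReward n γ i true + γ * chainValue n γ π (chainStep n i true) = 0 := by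
      rw [hstept, hr, hv, if_neg (by rintro ⟨-, h⟩; omega)]
      ring
    rw [hQu, if_neg (lt_irrefl 0)]
    simp only [Bool.false_eq_true, false_iff]
    rintro ⟨-, h⟩
    omega

/-- Howard's policy iteration on the chain MDP performs exactly `n+1 = |S|-1` policy
changes: for every `k ≤ n+1` the iterate `π_k` plays `u` exactly on the states `s_i`
with `n+1-k ≤ i ≤ n`; consequently `π_k ≠ π_{k+1}` for all `k ≤ n`, while
`π_{n+1} = π_{n+2}`. -/
theorem chain_policy_iteration_lower_bound (n : ℕ) (γ : ℝ) (hγ₀ : 0 < γ) (hγ₁ : γ < 1) :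
    (∀ k : ℕ, k ≤ n + 1 → ∀ i : Fin (n + 2),
      chainPI n γ k i = true ↔ (n + 1 - k ≤ i.val ∧ i.val ≤ n)) ∧
    (∀ k : ℕ, k ≤ n → chainPI n γ k ≠ chainPI n γ (k + 1)) ∧
    chainPI n γ (n + 1) = chainPI n γ (n + 2) := by
  have key : ∀ k : ℕ, goodPol n k (chainPI n γ k) := by
    intro k
    induction k with
    | zero =>
      intro i
      simp only [chainPI, Nat.sub_zero]
      constructor
      · intro h; exact absurd h (by simp)
      · intro ⟨h1, h2⟩; omega
    | succ k ih => exact greedy_good hγ₀ hγ₁ ih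
  refine ⟨fun k _ i => key k i, ?_, ?_⟩
  · intro k hk h
    have h1 := key k ⟨n - k, by omega⟩
    have h2 := key (k + 1) ⟨n - k, by omega⟩
    rw [h] at h1
    have ht : chainPI n γ (k + 1) ⟨n - k, by omega⟩ = true :=
      h2.mpr ⟨by simp only [Fin.val_mk]; omega, by simp only [Fin.val_mk]; omega⟩
    have := h1.mp ht
    simp only [Fin.val_mk] at this
    omega
  · funext i
    have h1 := key (n + 1) i
    have h2 := key (n + 2) i
    cases hb1 : chainPI n γ (n + 1) i <;> cases hb2 : chainPI n γ (n + 2) i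
    · rfl
    · exfalso
      have := h2.mp hb2
      have := h1.mpr ⟨by omega, this.2⟩
      rw [hb1] at this; exact Bool.false_ne_true this
    · exfalso
      have := h1.mp hb1
      have := h2.mpr ⟨by omega, this.2⟩
      rw [hb2] at this; exact Bool.false_ne_true this
    · rfl
end
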